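/- One-sided product estimate: for fibrewise maps f_1,...,f_r : X → Y and g : X̃ → Ỹ over B, D_B(f_1 ×_B g,...,f_r ×_B g) ≤ D_B(f_1,...,f_r). -/

import Mathlib

open Set

/-- Two continuous maps are fibrewise homotopic over `B`: there is a homotopy
whose every time-slice commutes with the projections to `B`. -/
def FibHomotopic {B X Y : Type*} [TopologicalSpace B] [TopologicalSpace X] [TopologicalSpace Y]
    (pX : X → B) (pY : Y → B) (f g : C(X, Y)) : Prop :=
  ∃ H : f.Homotopy g, ∀ (x : X) (t : unitInterval), pY (H (t, x)) = pX x

/-- Sequential parametrized homotopic distance of a family of fibrewise maps: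
the least `n` such that `X` admits an open cover by `n + 1` open sets on each of
which all the maps are pairwise fibrewise homotopic (`∞` if none exists). -/
noncomputable def fibDist {B X Y ι : Type*} [TopologicalSpace B] [TopologicalSpace X]
    [TopologicalSpace Y] (pX : X → B) (pY : Y → B) (f : ι → C(X, Y)) : ℕ∞ :=
  sInf {n : ℕ∞ | ∃ k : ℕ, (k : ℕ∞) = n ∧ ∃ U : Fin (k + 1) → Set X,
    (∀ i, IsOpen (U i)) ∧ (⋃ i, U i) = Set.univ ∧
    ∀ i s t, FibHomotopic (fun x : U i => pX (x : X)) pY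
      ((f s).restrict (U i)) ((f t).restrict (U i))}

/-- The fibred product of two fibrewise spaces over `B`. -/
abbrev FibProd {B X X' : Type*} [TopologicalSpace B] [TopologicalSpace X] [TopologicalSpace X']
    (pX : X → B) (pX' : X' → B) : Type _ := {z : X × X' // pX z.1 = pX' z.2}

/-- The fibrewise product `f ×_B g` of two fibrewise maps. -/
def fibProdMap {B X X' Y Y' : Type*} [TopologicalSpace B] [TopologicalSpace X]
    [TopologicalSpace X'] [TopologicalSpace Y] [TopologicalSpace Y']
    {pX : X → B} {pX' : X' → B} {pY : Y → B} {pY' : Y' → B}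
    (f : C(X, Y)) (g : C(X', Y')) (hf : ∀ x, pY (f x) = pX x) (hg : ∀ x, pY' (g x) = pX' x) :
    C(FibProd pX pX', FibProd pY pY') :=
  ⟨fun z => ⟨(f z.1.1, g z.1.2), by rw [hf, hg, z.2]⟩, by
    apply Continuous.subtype_mk
    exact ((f.continuous.comp continuous_fst).prodMk
      (g.continuous.comp continuous_snd)).comp continuous_subtype_val⟩

/-- One-sided product estimate: `D_B(f_1 ×_B g, …, f_r ×_B g) ≤ D_B(f_1, …, f_r)`. -/
theorem stmt14 {B X X' Y Y' : Type*} [TopologicalSpace B] [TopologicalSpace X]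
    [TopologicalSpace X'] [TopologicalSpace Y] [TopologicalSpace Y']
    (pX : X → B) (pX' : X' → B) (pY : Y → B) (pY' : Y' → B)
    (hpX : Continuous pX) (hpX' : Continuous pX') (hpY : Continuous pY) (hpY' : Continuous pY')
    (r : ℕ) (f : Fin r → C(X, Y)) (hf : ∀ i x, pY (f i x) = pX x)
    (g : C(X', Y')) (hg : ∀ x, pY' (g x) = pX' x) :
    fibDist (fun z : FibProd pX pX' => pX z.1.1) (fun w : FibProd pY pY' => pY w.1.1)
      (fun i => fibProdMap (f i) g (hf i) hg) ≤ fibDist pX pY f := by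
  apply sInf_le_sInf
  intro n hn
  obtain ⟨k, hk, U, hUopen, hUcov, hH⟩ := hn
  refine ⟨k, hk, fun i => (fun z : FibProd pX pX' => z.1.1) ⁻¹' (U i), ?_, ?_, ?_⟩
  · intro i
    exact (hUopen i).preimage (continuous_fst.comp continuous_subtype_val)
  · ext z
    simp only [Set.mem_iUnion, Set.mem_preimage, Set.mem_univ, iff_true]
    have : z.1.1 ∈ ⋃ i, U i := hUcov ▸ Set.mem_univ _
    simpa using this
  · intro i s t
    obtain ⟨H, hHfib⟩ := hH i s t
    have key : ∀ (t : unitInterval) (w : ↥((fun z : FibProd pX pX' => z.1.1) ⁻¹' (U i))),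
        pY (H (t, ⟨w.1.1.1, w.2⟩)) = pY' (g w.1.1.2) := by
      intro t w
      rw [hHfib, hg]
      exact w.1.2
    refine ⟨⟨⟨fun p => ⟨(H (p.1, ⟨p.2.1.1.1, p.2.2⟩), g p.2.1.1.2), key p.1 p.2⟩, ?_⟩, ?_, ?_⟩, ?_⟩
    · have hv : Continuous fun p : unitInterval × ↥((fun z : FibProd pX pX' => z.1.1) ⁻¹' (U i)) =>
          ((p.2 : FibProd pX pX') : X × X') := continuous_subtype_val.comp
            (continuous_subtype_val.comp continuous_snd)
      apply Continuous.subtype_mk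
      apply Continuous.prodMk
      · exact H.continuous.comp (continuous_fst.prodMk (hv.fst.subtype_mk _))
      · exact g.continuous.comp hv.snd
    · intro w
      apply Subtype.ext
      have h0 := H.apply_zero ⟨w.1.1.1, w.2⟩
      exact Prod.ext h0 rfl
    · intro w
      apply Subtype.ext
      have h1 := H.apply_one ⟨w.1.1.1, w.2⟩
      exact Prod.ext h1 rfl
    · intro w t
      exact hHfib ⟨w.1.1.1, w.2⟩ t
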